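/- Let φ : ℂⁿ → ℂᵐ be a ℂ-linear map, let A ⊆ ℂᵐ be an algebraic set, and let A₁, …, A_k be algebraic subsets of ℂᵐ, each contained in the image of φ, such that A ∩ Im(φ) = A₁ ∪ ⋯ ∪ A_k. Then the following two conditions are equivalent: (i) for every i the vanishing ideal of Aᵢ is a prime ideal, and for all i ≠ j, Aᵢ is not contained in Aⱼ; (ii) for every i the vanishing ideal of φ⁻¹(Aᵢ) is a prime ideal, and for all i ≠ j, φ⁻¹(Aᵢ) is not contained in φ⁻¹(Aⱼ). (In other words, A ∩ Im(φ) = A₁ ∪ ⋯ ∪ A_k is the decomposition of A ∩ Im(φ) into irreducible components if and only if φ⁻¹(A) = φ⁻¹(A₁) ∪ ⋯ ∪ φ⁻¹(A_k) is the decomposition of φ⁻¹(A) into irreducible components.) -/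

import Mathlib

open MvPolynomial

/-- A subset of `ℂᵏ` is an algebraic (Zariski-closed) set if it is the zero locus of its
vanishing ideal. -/
def IsAlgebraicSet {k : ℕ} (S : Set (Fin k → ℂ)) : Prop :=
  S = zeroLocus ℂ (vanishingIdeal ℂ S)

/-- Pullback of polynomials along a linear map. -/
noncomputable def lpb {a b : ℕ} (ψ : (Fin a → ℂ) →ₗ[ℂ] (Fin b → ℂ)) :
    MvPolynomial (Fin b) ℂ →+* MvPolynomial (Fin a) ℂ :=
  (aeval (fun i => ∑ j, C (ψ (fun l => if j = l then 1 else 0) i) * X j) :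
    MvPolynomial (Fin b) ℂ →ₐ[ℂ] MvPolynomial (Fin a) ℂ).toRingHom

lemma eval_lpb {a b : ℕ} (ψ : (Fin a → ℂ) →ₗ[ℂ] (Fin b → ℂ)) (x : Fin a → ℂ)
    (p : MvPolynomial (Fin b) ℂ) : eval x (lpb ψ p) = eval (ψ x) p := by
  have h : (eval x).comp (lpb ψ) = eval (ψ x) := by
    apply ringHom_ext
    · intro r; simp [lpb]
    · intro i
      simp only [lpb, RingHom.comp_apply, AlgHom.toRingHom_eq_coe, RingHom.coe_coe, aeval_X,
        map_sum, map_mul, eval_C, eval_X, MvPolynomial.eval_X]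
      rw [LinearMap.pi_apply_eq_sum_univ ψ x, Finset.sum_apply]
      exact Finset.sum_congr rfl fun j _ => by simp [mul_comm]
  exact RingHom.congr_fun h p

lemma aeval_lpb {a b : ℕ} (ψ : (Fin a → ℂ) →ₗ[ℂ] (Fin b → ℂ)) (x : Fin a → ℂ)
    (p : MvPolynomial (Fin b) ℂ) :
    (aeval x : MvPolynomial (Fin a) ℂ →ₐ[ℂ] ℂ) (lpb ψ p) = eval (ψ x) p :=
  eval_lpb ψ x p

/-- The "fiber expansion" of a polynomial: substitute `x + π t`, viewed as a polynomial
in `t` with coefficients polynomials in `x`. -/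
noncomputable def fibG {n : ℕ} (π : (Fin n → ℂ) →ₗ[ℂ] (Fin n → ℂ)) :
    MvPolynomial (Fin n) ℂ →+* MvPolynomial (Fin n) (MvPolynomial (Fin n) ℂ) :=
  (aeval (fun i => C (X i) + ∑ j, C (C (π (fun l => if j = l then 1 else 0) i)) * X j) :
    MvPolynomial (Fin n) ℂ →ₐ[ℂ] MvPolynomial (Fin n) (MvPolynomial (Fin n) ℂ)).toRingHom

lemma eval_fibG {n : ℕ} (π : (Fin n → ℂ) →ₗ[ℂ] (Fin n → ℂ)) (x t : Fin n → ℂ)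
    (p : MvPolynomial (Fin n) ℂ) :
    eval t (MvPolynomial.map (eval x) (fibG π p)) = eval (x + π t) p := by
  have h : (eval t).comp ((MvPolynomial.map (eval x)).comp (fibG π)) = eval (x + π t) := by
    apply ringHom_ext
    · intro r; simp [fibG]
    · intro i
      simp only [fibG, RingHom.comp_apply, AlgHom.toRingHom_eq_coe, RingHom.coe_coe, aeval_X,
        map_add, map_sum, map_mul, MvPolynomial.map_C, eval_C, MvPolynomial.map_X, eval_X,
        eval_add, eval_sum, eval_mul, Pi.add_apply]
      rw [LinearMap.pi_apply_eq_sum_univ π t, Finset.sum_apply]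
      congr 1
      exact Finset.sum_congr rfl fun j _ => by simp [mul_comm]
  exact RingHom.congr_fun h p

lemma fibG_zero_iff {n : ℕ} (π : (Fin n → ℂ) →ₗ[ℂ] (Fin n → ℂ)) (x : Fin n → ℂ)
    (f : MvPolynomial (Fin n) ℂ) :
    MvPolynomial.map (eval x) (fibG π f) = 0 ↔ ∀ t, eval (x + π t) f = 0 := by
  constructor
  · intro h t; rw [← eval_fibG π x t, h, map_zero]
  · intro h
    apply MvPolynomial.funext
    intro t
    rw [eval_fibG π x t, h t, map_zero]

lemma map_eval_eq_zero_iff {n : ℕ} (x : Fin n → ℂ)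
    (F : MvPolynomial (Fin n) (MvPolynomial (Fin n) ℂ)) :
    MvPolynomial.map (eval x) F = 0 ↔ ∀ c, eval x (coeff c F) = 0 := by
  constructor
  · intro h c
    have := congrArg (coeff c) h
    rwa [coeff_map, coeff_zero] at this
  · intro h
    apply MvPolynomial.ext
    intro c
    rw [coeff_map, coeff_zero]
    exact h c

/-- If the vanishing ideal of the preimage is prime, so is that of the set itself. -/
lemma prime_of_preimage {n m : ℕ} (φ : (Fin n → ℂ) →ₗ[ℂ] (Fin m → ℂ))
    (S : Set (Fin m → ℂ)) (hS : S ⊆ Set.range φ)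
    (hp : (vanishingIdeal ℂ (φ ⁻¹' S)).IsPrime) : (vanishingIdeal ℂ S).IsPrime := by
  constructor
  · -- not top
    intro htop
    rcases Set.eq_empty_or_nonempty (φ ⁻¹' S) with he | ⟨x, hx⟩
    · exact hp.ne_top (by rw [he, vanishingIdeal_empty])
    · have h1 : (1 : MvPolynomial (Fin m) ℂ) ∈ vanishingIdeal ℂ S := htop ▸ Submodule.mem_top
      have := mem_vanishingIdeal_iff.mp h1 (φ x) hx
      simp at this
  · intro f g hfg
    have hm : lpb φ f * lpb φ g ∈ vanishingIdeal ℂ (φ ⁻¹' S) := by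
      rw [← map_mul, mem_vanishingIdeal_iff]
      intro x hx
      rw [aeval_lpb]
      exact mem_vanishingIdeal_iff.mp hfg (φ x) hx
    rcases hp.mem_or_mem hm with h | h
    · left
      rw [mem_vanishingIdeal_iff]
      intro a ha
      obtain ⟨x, rfl⟩ := hS ha
      have := mem_vanishingIdeal_iff.mp h x ha
      rwa [aeval_lpb] at this
    · right
      rw [mem_vanishingIdeal_iff]
      intro a ha
      obtain ⟨x, rfl⟩ := hS ha
      have := mem_vanishingIdeal_iff.mp h x ha
      rwa [aeval_lpb] at this

/-- If the vanishing ideal of a set contained in the range of `φ` is prime, so is that of its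
preimage under `φ`. -/
lemma prime_preimage {n m : ℕ} (φ : (Fin n → ℂ) →ₗ[ℂ] (Fin m → ℂ))
    (S : Set (Fin m → ℂ)) (hS : S ⊆ Set.range φ)
    (hp : (vanishingIdeal ℂ S).IsPrime) : (vanishingIdeal ℂ (φ ⁻¹' S)).IsPrime := by
  -- a projection onto the kernel of φ
  obtain ⟨q, hq⟩ := (LinearMap.ker φ).exists_isCompl
  set π : (Fin n → ℂ) →ₗ[ℂ] (Fin n → ℂ) :=
    (LinearMap.ker φ).subtype ∘ₗ Submodule.linearProjOfIsCompl _ q hq with hπ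
  have hπker : ∀ t, φ (π t) = 0 := fun t =>
    LinearMap.mem_ker.mp (Submodule.linearProjOfIsCompl _ q hq t).2
  have hπfix : ∀ v ∈ LinearMap.ker φ, π v = v := by
    intro v hv
    have := Submodule.linearProjOfIsCompl_apply_left hq ⟨v, hv⟩
    exact congrArg Subtype.val this
  -- a linear section of φ on its range
  obtain ⟨ρ, hρ⟩ := φ.rangeRestrict.exists_rightInverse_of_surjective φ.range_rangeRestrict
  obtain ⟨q', hq'⟩ := (LinearMap.range φ).exists_isCompl
  set σ : (Fin m → ℂ) →ₗ[ℂ] (Fin n → ℂ) := ρ ∘ₗ Submodule.linearProjOfIsCompl _ q' hq' with hσdef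
  have hσ : ∀ y ∈ LinearMap.range φ, φ (σ y) = y := by
    intro y hy
    have h1 : Submodule.linearProjOfIsCompl _ q' hq' y = ⟨y, hy⟩ :=
      Submodule.linearProjOfIsCompl_apply_left hq' ⟨y, hy⟩
    have h2 : ∀ v, φ (ρ v) = ↑v := by
      intro v
      have := congrArg Subtype.val (LinearMap.congr_fun hρ v)
      simpa using this
    simp [hσdef, h1, h2]
  -- every point decomposes as section of its image plus kernel part
  have hdec : ∀ x : Fin n → ℂ, σ (φ x) + π (x - σ (φ x)) = x := by
    intro x
    have hker : x - σ (φ x) ∈ LinearMap.ker φ := by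
      rw [LinearMap.mem_ker, map_sub, hσ (φ x) ⟨x, rfl⟩, sub_self]
    rw [hπfix _ hker, add_sub_cancel]
  constructor
  · intro htop
    rcases Set.eq_empty_or_nonempty S with he | ⟨a, ha⟩
    · exact hp.ne_top (by rw [he, vanishingIdeal_empty])
    · obtain ⟨x, rfl⟩ := hS ha
      have h1 : (1 : MvPolynomial (Fin n) ℂ) ∈ vanishingIdeal ℂ (φ ⁻¹' S) :=
        htop ▸ Submodule.mem_top
      have := mem_vanishingIdeal_iff.mp h1 x ha
      simp at this
  · intro f g hfg
    by_cases hf : f ∈ vanishingIdeal ℂ (φ ⁻¹' S)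
    · exact Or.inl hf
    right
    rw [mem_vanishingIdeal_iff] at hf
    push_neg at hf
    obtain ⟨x₀, hx₀S, hx₀⟩ := hf
    -- f does not vanish on the fiber through x₀
    have hFf : MvPolynomial.map (eval (σ (φ x₀))) (fibG π f) ≠ 0 := by
      intro h
      have := (fibG_zero_iff π _ f).mp h (x₀ - σ (φ x₀))
      rw [hdec x₀] at this
      exact hx₀ this
    obtain ⟨c₀, hc₀⟩ : ∃ c₀, eval (σ (φ x₀)) (coeff c₀ (fibG π f)) ≠ 0 := by
      by_contra h
      push_neg at h
      exact hFf ((map_eval_eq_zero_iff _ _).mpr h)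
    have hQ : lpb σ (coeff c₀ (fibG π f)) ∉ vanishingIdeal ℂ S := by
      intro h
      have := mem_vanishingIdeal_iff.mp h (φ x₀) hx₀S
      rw [aeval_lpb] at this
      exact hc₀ this
    have hgcoef : ∀ d, lpb σ (coeff d (fibG π g)) ∈ vanishingIdeal ℂ S := by
      intro d
      have hmul : lpb σ (coeff c₀ (fibG π f)) * lpb σ (coeff d (fibG π g)) ∈
          vanishingIdeal ℂ S := by
        rw [mem_vanishingIdeal_iff]
        intro y hy
        have hyr : y ∈ LinearMap.range φ := hS hy
        have hfib : ∀ t, eval (σ y + π t) (f * g) = 0 := by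
          intro t
          apply mem_vanishingIdeal_iff.mp hfg
          rw [Set.mem_preimage, map_add, hπker, add_zero, hσ y hyr]
          exact hy
        have h0 : MvPolynomial.map (eval (σ y)) (fibG π f) *
            MvPolynomial.map (eval (σ y)) (fibG π g) = 0 := by
          rw [← map_mul, ← map_mul]
          exact (fibG_zero_iff π _ _).mpr hfib
        rcases mul_eq_zero.mp h0 with h' | h'
        · have : eval (σ y) (coeff c₀ (fibG π f)) = 0 :=
            (map_eval_eq_zero_iff _ _).mp h' c₀
          rw [map_mul, aeval_lpb, this, zero_mul]
        · have : eval (σ y) (coeff d (fibG π g)) = 0 :=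
            (map_eval_eq_zero_iff _ _).mp h' d
          rw [map_mul, aeval_lpb σ y, aeval_lpb σ y, this, mul_zero]
      rcases hp.mem_or_mem hmul with h | h
      · exact absurd h hQ
      · exact h
    rw [mem_vanishingIdeal_iff]
    intro x hx
    have hGg : MvPolynomial.map (eval (σ (φ x))) (fibG π g) = 0 := by
      rw [map_eval_eq_zero_iff]
      intro c
      have := mem_vanishingIdeal_iff.mp (hgcoef c) (φ x) hx
      rwa [aeval_lpb] at this
    have := (fibG_zero_iff π _ g).mp hGg (x - σ (φ x))
    rwa [hdec x] at this

/-- Let `φ : ℂⁿ → ℂᵐ` be a linear map, `A ⊆ ℂᵐ` an algebraic set and `A₁, …, A_k` algebraic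
sets contained in `Im(φ)` with `A ∩ Im(φ) = A₁ ∪ ⋯ ∪ A_k`. Then the `Aᵢ` are the irreducible
components of `A ∩ Im(φ)` (each vanishing ideal prime, no mutual containments) if and only if
the `φ⁻¹(Aᵢ)` are the irreducible components of `φ⁻¹(A)` in the same sense. -/
theorem linear_preimage_irreducible_components
    (n m k : ℕ) (φ : (Fin n → ℂ) →ₗ[ℂ] (Fin m → ℂ))
    (A : Set (Fin m → ℂ)) (hA : IsAlgebraicSet A)
    (Ai : Fin k → Set (Fin m → ℂ))
    (hAi : ∀ i, IsAlgebraicSet (Ai i))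
    (hsub : ∀ i, Ai i ⊆ Set.range φ)
    (hdecomp : A ∩ Set.range φ = ⋃ i, Ai i) :
    ((∀ i, (vanishingIdeal ℂ (Ai i)).IsPrime) ∧
        ∀ i j, i ≠ j → ¬ Ai i ⊆ Ai j) ↔
      ((∀ i, (vanishingIdeal ℂ (φ ⁻¹' (Ai i))).IsPrime) ∧
        ∀ i j, i ≠ j → ¬ φ ⁻¹' (Ai i) ⊆ φ ⁻¹' (Ai j)) := by
  have hsubiff : ∀ i j : Fin k, (Ai i ⊆ Ai j ↔ φ ⁻¹' (Ai i) ⊆ φ ⁻¹' (Ai j)) := by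
    intro i j
    constructor
    · intro h x hx
      exact h hx
    · intro h a ha
      obtain ⟨x, rfl⟩ := hsub i ha
      exact h ha
  constructor
  · rintro ⟨h1, h2⟩
    exact ⟨fun i => prime_preimage φ (Ai i) (hsub i) (h1 i),
      fun i j hij hc => h2 i j hij ((hsubiff i j).mpr hc)⟩
  · rintro ⟨h1, h2⟩
    exact ⟨fun i => prime_of_preimage φ (Ai i) (hsub i) (h1 i),
      fun i j hij hc => h2 i j hij ((hsubiff i j).mp hc)⟩
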